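/- Suppose that in Algorithm niAPG every proximal step is exact, F is bounded below, and F is coercive (F(x) → +∞ as ‖x‖ → +∞). Then the sequences (x_k)_{k≥1} and (v_k)_{k≥1} are bounded, and hence each has at least one limit point (a convergent subsequence). -/

import Mathlib

open Filter

open scoped RealInnerProductSpace
lemma descent_aux {E : Type*} [NormedAddCommGroup E] [InnerProductSpace ℝ E] [CompleteSpace E]
    (f : E → ℝ) (f' : E → E) (L : ℝ) (hL : 0 ≤ L)
    (hf : ∀ x, HasGradientAt f (f' x) x)
    (hlip : ∀ x y, ‖f' x - f' y‖ ≤ L * ‖x - y‖) (x y : E) :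
    f y ≤ f x + ⟪f' x, y - x⟫ + L / 2 * ‖y - x‖ ^ 2 := by
  have hf'cont : Continuous f' := by
    have : LipschitzWith (Real.toNNReal L) f' := by
      apply LipschitzWith.of_dist_le_mul
      intro a b
      simpa [dist_eq_norm, Real.coe_toNNReal L hL] using hlip a b
    exact this.continuous
  set γ : ℝ → E := fun t => x + t • (y - x) with hγ
  have hγcont : Continuous γ := by
    apply continuous_const.add (continuous_id.smul continuous_const)
  have hγderiv : ∀ t : ℝ, HasDerivAt γ (y - x) t := by
    intro t
    have h := ((hasDerivAt_id t).smul_const (y - x)).const_add x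
    rw [one_smul] at h
    exact h
  have hφ : ∀ t : ℝ, HasDerivAt (fun s => f (γ s)) ⟪f' (γ t), y - x⟫ t := by
    intro t
    have h1 := (hf (γ t)).hasFDerivAt.comp_hasDerivAt t (hγderiv t)
    exact h1
  have hcont : Continuous fun t : ℝ => ⟪f' (γ t), y - x⟫ :=
    (hf'cont.comp hγcont).inner continuous_const
  have hint : ∫ t in (0:ℝ)..1, ⟪f' (γ t), y - x⟫ = f (γ 1) - f (γ 0) :=
    intervalIntegral.integral_eq_sub_of_hasDerivAt (fun t _ => hφ t)
      (hcont.intervalIntegrable 0 1)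
  have hγ0 : γ 0 = x := by simp [hγ]
  have hγ1 : γ 1 = y := by simp [hγ]
  have hbound : (∫ t in (0:ℝ)..1, ⟪f' (γ t), y - x⟫) ≤
      ⟪f' x, y - x⟫ + L / 2 * ‖y - x‖ ^ 2 := by
    have hle : ∀ t ∈ Set.Icc (0:ℝ) 1,
        ⟪f' (γ t), y - x⟫ ≤ ⟪f' x, y - x⟫ + (L * ‖y - x‖ ^ 2) * t := by
      intro t ht
      have h1 : ⟪f' (γ t) - f' x, y - x⟫ ≤ ‖f' (γ t) - f' x‖ * ‖y - x‖ :=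
        real_inner_le_norm _ _
      have h2 : ‖f' (γ t) - f' x‖ ≤ L * (t * ‖y - x‖) := by
        have := hlip (γ t) x
        have hγtx : γ t - x = t • (y - x) := by simp [hγ]
        rw [hγtx, norm_smul, Real.norm_eq_abs, abs_of_nonneg ht.1] at this
        linarith
      have h3 : ‖f' (γ t) - f' x‖ * ‖y - x‖ ≤ L * (t * ‖y - x‖) * ‖y - x‖ :=
        mul_le_mul_of_nonneg_right h2 (norm_nonneg _)
      have h4 : ⟪f' (γ t), y - x⟫ = ⟪f' x, y - x⟫ + ⟪f' (γ t) - f' x, y - x⟫ := by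
        rw [inner_sub_left]; ring
      rw [h4]
      nlinarith [norm_nonneg (y - x)]
    have hint2 : IntervalIntegrable
        (fun t : ℝ => ⟪f' x, y - x⟫ + (L * ‖y - x‖ ^ 2) * t) MeasureTheory.volume 0 1 := by
      apply Continuous.intervalIntegrable
      exact continuous_const.add (continuous_const.mul continuous_id)
    have hmono := intervalIntegral.integral_mono_on (by norm_num : (0:ℝ) ≤ 1)
      (hcont.intervalIntegrable 0 1) hint2 hle
    have hval : (∫ t in (0:ℝ)..1, (⟪f' x, y - x⟫ + (L * ‖y - x‖ ^ 2) * t))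
        = ⟪f' x, y - x⟫ + L / 2 * ‖y - x‖ ^ 2 := by
      have h1 := intervalIntegral.integral_add (μ := MeasureTheory.volume)
        (a := (0:ℝ)) (b := 1) (f := fun _ : ℝ => (⟪f' x, y - x⟫ : ℝ))
        (g := fun t : ℝ => (L * ‖y - x‖ ^ 2) * t) intervalIntegrable_const
        ((continuous_const.mul continuous_id).intervalIntegrable 0 1)
      rw [h1, intervalIntegral.integral_const_mul, integral_id]
      simp
      ring
    linarith [hmono, hval.le, hval.ge]
  rw [hγ0, hγ1] at hint
  linarith

/-- Theorem 1, first part: boundedness and existence of limit points.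
With exact proximal steps, `F` bounded below and coercive, the niAPG sequences `(x_k)_{k≥1}`
and `(v_k)_{k≥1}` are bounded, and each has a convergent subsequence. -/
theorem niAPG_exact_bounded_limit_points
    {E : Type*} [NormedAddCommGroup E] [InnerProductSpace ℝ E] [FiniteDimensional ℝ E]
    (f g F : E → ℝ) (f' : E → E) (L η ρ : ℝ)
    (hL : 0 < L)
    (hf : ∀ x, HasGradientAt f (f' x) x)
    (hlip : ∀ x y, ‖f' x - f' y‖ ≤ L * ‖x - y‖)
    (hg : LowerSemicontinuous g)
    (hF : ∀ x, F x = f x + g x)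
    (hbdd : BddBelow (Set.range F))
    (hcoer : Tendsto F (Filter.comap (fun w : E => ‖w‖) atTop) atTop)
    (hη : 0 < η) (hηL : η < 1 / L) (hρ : ρ = 1 / η)
    (q : ℕ) (x y v z : ℕ → E) (Δ : ℕ → ℝ)
    (hx01 : x 0 = x 1)
    (hy : ∀ k, 1 ≤ k → y k = x k + ((((k : ℝ) - 1) / ((k : ℝ) + 2)) • (x k - x (k - 1))))
    (hΔ : ∀ k, ∀ hk : 1 ≤ k, Δ k =
      (Finset.Icc (max 1 (k - q)) k).sup' (Finset.nonempty_Icc.mpr (by omega))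
        (fun t => F (x t)))
    (hv : ∀ k, 1 ≤ k → v k = if F (y k) ≤ Δ k then y k else x k)
    (hz : ∀ k, 1 ≤ k → z k = v k - η • f' (v k))
    (hprox : ∀ k, 1 ≤ k → ∀ w : E,
      (1 / 2) * ‖x (k + 1) - z k‖ ^ 2 + η * g (x (k + 1)) ≤
        (1 / 2) * ‖w - z k‖ ^ 2 + η * g w) :
    (∃ C : ℝ, ∀ k, 1 ≤ k → ‖x k‖ ≤ C) ∧
    (∃ C : ℝ, ∀ k, 1 ≤ k → ‖v k‖ ≤ C) ∧
    (∃ x' : E, ∃ σ : ℕ → ℕ, StrictMono σ ∧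
      Tendsto (fun j => x (σ j + 1)) atTop (nhds x')) ∧
    (∃ v' : E, ∃ σ : ℕ → ℕ, StrictMono σ ∧
      Tendsto (fun j => v (σ j + 1)) atTop (nhds v')) := by
  have hηL1 : η * L < 1 := by
    rw [lt_div_iff₀ hL] at hηL; linarith
  -- Step 1: F (x (k+1)) ≤ F (v k)
  have step1 : ∀ k, 1 ≤ k → F (x (k + 1)) ≤ F (v k) := by
    intro k hk
    have hp := hprox k hk (v k)
    rw [hz k hk] at hp
    have e1 : x (k + 1) - (v k - η • f' (v k)) = (x (k + 1) - v k) + η • f' (v k) := by abel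
    have e2 : v k - (v k - η • f' (v k)) = η • f' (v k) := by abel
    rw [e1, e2] at hp
    have e3 : ‖(x (k + 1) - v k) + η • f' (v k)‖ ^ 2 =
        ‖x (k + 1) - v k‖ ^ 2 + 2 * (η * ⟪x (k + 1) - v k, f' (v k)⟫)
          + ‖η • f' (v k)‖ ^ 2 := by
      rw [@norm_add_sq_real, real_inner_smul_right]
    rw [e3] at hp
    have hdesc := descent_aux f f' L hL.le hf hlip (v k) (x (k + 1))
    have hinner : ⟪f' (v k), x (k + 1) - v k⟫ = ⟪x (k + 1) - v k, f' (v k)⟫ :=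
      real_inner_comm _ _
    rw [hinner] at hdesc
    have hF1 := hF (x (k + 1)); have hF2 := hF (v k)
    have hmul : η * F (x (k + 1)) ≤ η * F (v k) := by
      nlinarith [mul_le_mul_of_nonneg_left hdesc hη.le, sq_nonneg ‖x (k + 1) - v k‖,
        mul_nonneg (sub_nonneg.mpr hηL1.le) (sq_nonneg ‖x (k + 1) - v k‖)]
    exact (mul_le_mul_iff_right₀ hη).mp hmul
  -- Step 2: F (v k) ≤ Δ k
  have step2 : ∀ k, 1 ≤ k → F (v k) ≤ Δ k := by
    intro k hk
    have hxk : F (x k) ≤ Δ k := by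
      rw [hΔ k hk]
      exact Finset.le_sup' (fun t => F (x t)) (Finset.mem_Icc.mpr ⟨by omega, le_rfl⟩)
    rw [hv k hk]
    by_cases h : F (y k) ≤ Δ k
    · simpa [h] using h
    · simpa [h] using hxk
  -- Step 3: F (x k) ≤ F (x 1) for all k ≥ 1
  have main : ∀ n, ∀ k, 1 ≤ k → k ≤ n → F (x k) ≤ F (x 1) := by
    intro n
    induction n with
    | zero => intro k h1 h0; omega
    | succ n ih =>
      intro k h1 hk
      rcases Nat.lt_or_ge k (n + 1) with h | h
      · exact ih k h1 (by omega)
      · have hk' : k = n + 1 := by omega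
        subst hk'
        by_cases hn : n = 0
        · subst hn; exact le_rfl
        · have hn1 : 1 ≤ n := by omega
          calc F (x (n + 1)) ≤ F (v n) := step1 n hn1
            _ ≤ Δ n := step2 n hn1
            _ ≤ F (x 1) := by
                rw [hΔ n hn1]
                apply Finset.sup'_le
                intro t ht
                rw [Finset.mem_Icc] at ht
                exact ih t (le_trans (le_max_left 1 _) ht.1) ht.2
  have hxle : ∀ k, 1 ≤ k → F (x k) ≤ F (x 1) := fun k h => main k k h le_rfl
  have hvle : ∀ k, 1 ≤ k → F (v k) ≤ F (x 1) := by
    intro k hk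
    refine le_trans (step2 k hk) ?_
    rw [hΔ k hk]
    apply Finset.sup'_le
    intro t ht
    rw [Finset.mem_Icc] at ht
    exact hxle t (le_trans (le_max_left 1 _) ht.1)
  -- Coercivity: get radius R
  have hco : ∀ᶠ r : ℝ in atTop, ∀ w : E, ‖w‖ = r → F (x 1) + 1 ≤ F w := by
    have h := hcoer.eventually (eventually_ge_atTop (F (x 1) + 1))
    rwa [eventually_comap] at h
  obtain ⟨R, hR⟩ := eventually_atTop.mp hco
  have hboundF : ∀ w : E, F w ≤ F (x 1) → ‖w‖ ≤ R := by
    intro w hw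
    by_contra h
    push_neg at h
    have := hR ‖w‖ h.le w rfl
    linarith
  have bx : ∀ k, 1 ≤ k → ‖x k‖ ≤ R := fun k hk => hboundF _ (hxle k hk)
  have bv : ∀ k, 1 ≤ k → ‖v k‖ ≤ R := fun k hk => hboundF _ (hvle k hk)
  refine ⟨⟨R, bx⟩, ⟨R, bv⟩, ?_, ?_⟩
  · have hmem : ∀ j : ℕ, x (j + 1) ∈ Metric.closedBall (0 : E) R := fun j => by
      simpa [Metric.mem_closedBall, dist_zero_right] using bx (j + 1) (by omega)
    obtain ⟨x', -, σ, hσ, hconv⟩ :=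
      tendsto_subseq_of_bounded Metric.isBounded_closedBall hmem
    exact ⟨x', σ, hσ, hconv⟩
  · have hmem : ∀ j : ℕ, v (j + 1) ∈ Metric.closedBall (0 : E) R := fun j => by
      simpa [Metric.mem_closedBall, dist_zero_right] using bv (j + 1) (by omega)
    obtain ⟨v', -, σ, hσ, hconv⟩ :=
      tendsto_subseq_of_bounded Metric.isBounded_closedBall hmem
    exact ⟨v', σ, hσ, hconv⟩
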